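/- If k ≥ 2 is a power of 2, then the odd graph O_k has chromatic index strictly greater than k (it is of class two). -/

import Mathlib

open Finset SimpleGraph

def IsProperEdgeColoring {V : Type*} {α : Type*} (G : SimpleGraph V) (c : Sym2 V → α) : Prop :=
  ∀ v w₁ w₂, G.Adj v w₁ → G.Adj v w₂ → w₁ ≠ w₂ → c s(v, w₁) ≠ c s(v, w₂)

/-- The odd graph O_k: vertices are the (k-1)-subsets of a (2k-1)-set,
adjacent iff disjoint. -/
def oddGraph (k : ℕ) : SimpleGraph {s : Finset (Fin (2 * k - 1)) // s.card = k - 1} where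
  Adj x y := x ≠ y ∧ Disjoint x.1 y.1
  symm := ⟨fun _ _ ⟨h, d⟩ => ⟨h.symm, d.symm⟩⟩
  loopless := ⟨fun _ ⟨h, _⟩ => h rfl⟩

instance (k : ℕ) : DecidableRel (oddGraph k).Adj := fun _ _ => (instDecidableAnd : Decidable (_ ∧ _))

/-- All entries of row `2^a - 1` of Pascal's triangle are odd. -/
lemma odd_choose_two_pow_sub_one (a : ℕ) : ∀ j : ℕ, j ≤ 2 ^ a - 1 →
    Nat.choose (2 ^ a - 1) j % 2 = 1 := by
  induction a with
  | zero =>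
      intro j hj
      interval_cases j
      simp
  | succ a ih =>
      intro j hj
      haveI : Fact (Nat.Prime 2) := ⟨Nat.prime_two⟩
      have hmod := Choose.choose_modEq_choose_mod_mul_choose_div_nat
        (p := 2) (n := 2 ^ (a + 1) - 1) (k := j)
      have h2 : 2 ^ (a + 1) = 2 * 2 ^ a := by ring
      have hpos : 1 ≤ 2 ^ a := Nat.one_le_two_pow
      have hm : (2 ^ (a + 1) - 1) % 2 = 1 := by omega
      have hd : (2 ^ (a + 1) - 1) / 2 = 2 ^ a - 1 := by omega
      have hj2 : j / 2 ≤ 2 ^ a - 1 := by omega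
      have hone : Nat.choose 1 (j % 2) = 1 := by
        rcases Nat.mod_two_eq_zero_or_one j with h | h <;> simp [h]
      rw [hm, hd, hone, one_mul] at hmod
      have := ih (j / 2) hj2
      unfold Nat.ModEq at hmod
      omega

theorem stmt_15 (k : ℕ) (hk : 2 ≤ k) (hpow : ∃ m : ℕ, k = 2 ^ m) :
    ¬ ∃ c : Sym2 {s : Finset (Fin (2 * k - 1)) // s.card = k - 1} → Fin k,
      IsProperEdgeColoring (oddGraph k) c := by
  rintro ⟨c, hc⟩
  -- the odd graph is k-regular
  have hdeg : ∀ v : {s : Finset (Fin (2 * k - 1)) // s.card = k - 1}, ((oddGraph k).neighborFinset v).card = k := by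
    intro v
    have hbij : ((oddGraph k).neighborFinset v).card
        = (Finset.powersetCard (k - 1) (v.1ᶜ)).card := by
      apply Finset.card_bij (fun w _ => w.1)
      · intro w hw
        rw [mem_neighborFinset] at hw
        rw [Finset.mem_powersetCard]
        exact ⟨le_compl_iff_disjoint_right.mpr hw.2.symm, w.2⟩
      · intro w₁ _ w₂ _ h
        exact Subtype.ext h
      · intro t ht
        rw [Finset.mem_powersetCard] at ht
        refine ⟨⟨t, ht.2⟩, ?_, rfl⟩
        rw [mem_neighborFinset]
        refine ⟨?_, (le_compl_iff_disjoint_right.mp ht.1).symm⟩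
        intro h
        have : Disjoint v.1 v.1 := by
          conv_rhs => rw [h]
          exact (le_compl_iff_disjoint_right.mp ht.1).symm
        have hv : v.1 = ∅ := by simpa using disjoint_self.mp this
        have := v.2
        rw [hv] at this
        simp at this
        omega
    rw [hbij, Finset.card_powersetCard]
    have hcard : (v.1ᶜ).card = k := by
      have := v.2
      have := Finset.card_compl v.1
      simp only [Fintype.card_fin] at this
      omega
    rw [hcard]
    have h1 : k - 1 = k - 1 := rfl
    calc k.choose (k - 1) = k.choose 1 := Nat.choose_symm (by omega : 1 ≤ k)
      _ = k := Nat.choose_one_right k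
  -- every color appears at every vertex, in particular color 0, uniquely
  have z : Fin k := ⟨0, by omega⟩
  have key : ∀ v : {s : Finset (Fin (2 * k - 1)) // s.card = k - 1}, ∃! w : {s : Finset (Fin (2 * k - 1)) // s.card = k - 1}, (oddGraph k).Adj v w ∧ c s(v, w) = z := by
    intro v
    have hki : k ≠ 0 := by omega
    let g : {w // w ∈ (oddGraph k).neighborFinset v} → Fin k :=
      fun w => c s(v, w.1)
    have ginj : Function.Injective g := by
      intro w₁ w₂ h
      by_contra hne
      exact hc v w₁.1 w₂.1
        ((mem_neighborFinset _ _ _).mp w₁.2) ((mem_neighborFinset _ _ _).mp w₂.2)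
        (fun h' => hne (Subtype.ext h')) h
    have gbij : Function.Bijective g := by
      rw [Fintype.bijective_iff_injective_and_card]
      refine ⟨ginj, ?_⟩
      rw [Fintype.card_coe, hdeg v, Fintype.card_fin]
    obtain ⟨w, hw⟩ := gbij.2 z
    refine ⟨w.1, ⟨(mem_neighborFinset _ _ _).mp w.2, hw⟩, ?_⟩
    intro y ⟨hy1, hy2⟩
    by_contra hne
    exact hc v y w.1 hy1 ((mem_neighborFinset _ _ _).mp w.2) hne (hy2.trans hw.symm)
  classical
  let f : {s : Finset (Fin (2 * k - 1)) // s.card = k - 1} →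
      {s : Finset (Fin (2 * k - 1)) // s.card = k - 1} := fun v => (key v).choose
  have hf_adj : ∀ v, (oddGraph k).Adj v (f v) := fun v => (key v).choose_spec.1.1
  have hf_c : ∀ v, c s(v, f v) = z := fun v => (key v).choose_spec.1.2
  have hf_inv : ∀ v, f (f v) = v := fun v =>
    ((key (f v)).choose_spec.2 v
      ⟨(hf_adj v).symm, by rw [Sym2.eq_swap]; exact hf_c v⟩).symm
  have hf_ne : ∀ v, f v ≠ v := by
    intro v h
    have := hf_adj v
    rw [h] at this
    exact (oddGraph k).loopless.irrefl v this
  -- `f` is a fixed-point-free involution, so `|V|` is even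
  haveI : Fact (Nat.Prime 2) := ⟨Nat.prime_two⟩
  let F : Function.End {s : Finset (Fin (2 * k - 1)) // s.card = k - 1} := f
  have hpow2 : F ^ (2 : ℕ) ^ 1 = 1 := by
    have h21 : (2 : ℕ) ^ 1 = 2 := by norm_num
    rw [h21, pow_two]
    funext x
    show f (f x) = x
    exact hf_inv x
  have hmodeq := Equiv.Perm.card_fixedPoints_modEq (p := 2) (n := 1) hpow2
  haveI : IsEmpty (Function.fixedPoints F) := by
    constructor
    rintro ⟨x, hx⟩
    exact hf_ne x hx
  have h0 : Fintype.card (Function.fixedPoints F) = 0 := Fintype.card_eq_zero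
  rw [h0] at hmodeq
  -- but `|V|` is odd since `k` is a power of two
  have hcardV : Fintype.card {s : Finset (Fin (2 * k - 1)) // s.card = k - 1}
      = Nat.choose (2 * k - 1) (k - 1) := by
    rw [Fintype.card_finset_len, Fintype.card_fin]
  obtain ⟨m, rfl⟩ := hpow
  have hodd : Nat.choose (2 * 2 ^ m - 1) (2 ^ m - 1) % 2 = 1 := by
    have h1 : 2 * 2 ^ m - 1 = 2 ^ (m + 1) - 1 := by ring_nf
    rw [h1]
    apply odd_choose_two_pow_sub_one
    have : (2:ℕ) ^ m ≤ 2 ^ (m + 1) := Nat.pow_le_pow_right (by norm_num) (by omega)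
    omega
  unfold Nat.ModEq at hmodeq
  rw [hcardV] at hmodeq
  omega
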